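/- arXiv:1912.10341 — 6 statements merged into one kernel-verified Lean document; each statement's English description precedes it below -/
import Mathlib

section
/- Let X ≥ 16, N = ⌊√(2πX)⌋, k a positive integer with k ≤ N, Y a real number with |Y| ≤ 1/(kN), and τ = 1/X + 2πiY. Then Re(1/τ) ≥ 0.07·k². -/
open Real Complex

set_option maxHeartbeats 1000000 in
theorem stmt_4 (X : ℝ) (hX : 16 ≤ X) (N : ℕ) (hN : N = ⌊Real.sqrt (2 * π * X)⌋₊)
    (k : ℕ) (hk : 1 ≤ k) (hkN : k ≤ N) (Y : ℝ) (hY : |Y| ≤ 1 / (k * N))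
    (τ : ℂ) (hτ : τ = 1 / X + 2 * π * Complex.I * Y) :
    0.07 * (k : ℝ) ^ 2 ≤ (1 / τ).re := by
  have hπ1 : 3.1415 ≤ π := by linarith [Real.pi_gt_d6]
  have hπ2 : π ≤ 3.1416 := by linarith [Real.pi_lt_d6]
  have hX0 : (0:ℝ) < X := by linarith
  set t := Real.sqrt (2 * π * X) with ht
  have ht0 : 0 ≤ t := Real.sqrt_nonneg _
  have ht2 : t ^ 2 = 2 * π * X := Real.sq_sqrt (by positivity)
  have ht10 : 10 ≤ t := by nlinarith [ht2, sq_nonneg (t - 10)]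
  have hNt : (N:ℝ) ≤ t := by rw [hN]; exact Nat.floor_le ht0
  have hNt' : t ≤ (N:ℝ) + 1 := by rw [hN]; exact le_of_lt (Nat.lt_floor_add_one t)
  clear_value t
  have hk1 : (1:ℝ) ≤ (k:ℝ) := by exact_mod_cast hk
  have hkN' : (k:ℝ) ≤ (N:ℝ) := by exact_mod_cast hkN
  have hN0 : (0:ℝ) < (N:ℝ) := by linarith
  have hk0 : (0:ℝ) < (k:ℝ) := by linarith
  -- Y bound : Y^2 * k^2 * N^2 ≤ 1
  have h1 : |Y| * ((k:ℝ) * (N:ℝ)) ≤ 1 := by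
    calc |Y| * ((k:ℝ)*(N:ℝ)) ≤ (1/((k:ℝ)*(N:ℝ))) * ((k:ℝ)*(N:ℝ)) := by
          apply mul_le_mul_of_nonneg_right _ (by positivity)
          exact_mod_cast hY
      _ = 1 := by field_simp
  have hY2 : Y^2 * (k:ℝ)^2 * (N:ℝ)^2 ≤ 1 := by
    have ha : 0 ≤ |Y| * ((k:ℝ)*(N:ℝ)) := by positivity
    have h2 : (|Y| * ((k:ℝ)*(N:ℝ)))^2 ≤ 1 := by nlinarith [h1, ha]
    have h4 : (|Y| * ((k:ℝ)*(N:ℝ)))^2 = Y^2 * (k:ℝ)^2 * (N:ℝ)^2 := by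
      rw [mul_pow, _root_.sq_abs Y]; ring
    linarith [h4 ▸ h2]
  -- key polynomial inequality
  have hs1 : (N:ℝ)^2 ≤ 2*π*X := by nlinarith [hNt, ht2, (Nat.cast_nonneg N : (0:ℝ) ≤ (N:ℝ))]
  have hs2 : t^2 - 2*t + 1 ≤ (N:ℝ)^2 := by nlinarith [hNt', ht10]
  have hB' : 0.14*π*t^2 ≤ (1 - 0.14*π)*(t^2 - 2*t + 1) := by
    have c1 : (0:ℝ) ≤ t^2 - 2*t + 1 := by nlinarith [sq_nonneg (t-1)]
    have c2 : 0.439824*t^2 ≤ 0.560176*(t^2 - 2*t + 1) := by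
      nlinarith [sq_nonneg (t - 10), ht10]
    have d1 : 0.14*π*t^2 ≤ 0.439824*t^2 := by nlinarith [sq_nonneg t, hπ2]
    have d2 : 0.560176*(t^2-2*t+1) ≤ (1 - 0.14*π)*(t^2-2*t+1) := by
      nlinarith [c1, hπ2]
    linarith
  have hA : 0.07*(k:ℝ)^2*(N:ℝ)^2 ≤ 0.14*π*X*(N:ℝ)^2 := by
    nlinarith [mul_le_mul_of_nonneg_right
      (mul_self_le_mul_self (le_of_lt hk0) hkN') (sq_nonneg (N:ℝ)), hs1, sq_nonneg (N:ℝ), hN0]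
  have hB : 0.28*π^2*X^2 ≤ (1 - 0.14*π)*X*(N:ℝ)^2 := by
    have e : 0.28*π^2*X^2 = (0.14*π*t^2)*X := by rw [ht2]; ring
    rw [e]
    calc (0.14*π*t^2)*X ≤ ((1 - 0.14*π)*(t^2 - 2*t + 1))*X :=
          mul_le_mul_of_nonneg_right hB' hX0.le
      _ ≤ (1 - 0.14*π)*X*(N:ℝ)^2 := by
          have hpos : (0:ℝ) ≤ (1 - 0.14*π)*X := by nlinarith [hπ2, hX0]
          nlinarith [mul_le_mul_of_nonneg_left hs2 hpos]
  have key : 0.07*(k:ℝ)^2*(N:ℝ)^2 + 0.28*π^2*X^2 ≤ X*(N:ℝ)^2 := by nlinarith [hA, hB]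
  -- compute real and imaginary parts
  have hre : τ.re = 1/X := by simp [hτ]
  have him : τ.im = 2*π*Y := by simp [hτ]
  rw [one_div, Complex.inv_re, Complex.normSq_apply, hre, him]
  have hD : (0:ℝ) < 1/X * (1/X) + 2*π*Y * (2*π*Y) := by
    have h2 : (0:ℝ) < 1/X := by positivity
    nlinarith [mul_self_nonneg (2*π*Y)]
  rw [le_div_iff₀ hD]
  have hfin : 0.07*(k:ℝ)^2 * (1 + (2*π*Y)^2 * X^2) ≤ X := by
    have hN2 : (0:ℝ) < (N:ℝ)^2 := by positivity
    have step : 0.07*(k:ℝ)^2 * (1 + (2*π*Y)^2 * X^2) ≤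
        (0.07*(k:ℝ)^2*(N:ℝ)^2 + 0.28*π^2*X^2)/(N:ℝ)^2 := by
      rw [le_div_iff₀ hN2]
      nlinarith [mul_le_mul_of_nonneg_left hY2
        (by positivity : (0:ℝ) ≤ 0.28*π^2*X^2)]
    calc 0.07*(k:ℝ)^2 * (1 + (2*π*Y)^2 * X^2)
        ≤ (0.07*(k:ℝ)^2*(N:ℝ)^2 + 0.28*π^2*X^2)/(N:ℝ)^2 := step
      _ ≤ X := by rw [div_le_iff₀ hN2]; linarith [key]
  have expand : 1/X * (1/X) + 2*π*Y * (2*π*Y) = (1 + (2*π*Y)^2 * X^2)/X^2 := by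
    field_simp
  have e3 : 0.07*(k:ℝ)^2 * ((1 + (2*π*Y)^2*X^2)/X^2)
      = (0.07*(k:ℝ)^2 * (1 + (2*π*Y)^2*X^2))/X^2 := by ring
  rw [expand, e3, div_le_div_iff₀ (by positivity) hX0]
  nlinarith [mul_le_mul_of_nonneg_right hfin hX0.le]
end

section
/- For every real x with 0 < x ≤ π/2, one has |log(2 sin x)| ≤ (π log 2)/(2x). -/
open Real

theorem stmt_5 (x : ℝ) (hx : 0 < x) (hx' : x ≤ π / 2) :
    |Real.log (2 * Real.sin x)| ≤ π * Real.log 2 / (2 * x) := by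
  have hpi : 0 < π := Real.pi_pos
  have hxpi : x < π := lt_of_le_of_lt hx' (by linarith)
  have hs : 0 < Real.sin x := Real.sin_pos_of_pos_of_lt_pi hx hxpi
  have hlog2 : (1:ℝ)/2 < Real.log 2 := by
    have := Real.log_two_gt_d9; linarith
  rw [abs_le]
  constructor
  · -- lower bound: -(π log 2/(2x)) ≤ log (2 sin x)
    have hj : 2 / π * x ≤ Real.sin x := Real.mul_le_sin hx.le hx'
    have h4x : 0 < 4 * x / π := by positivity
    have h1 : Real.log (4 * x / π) ≤ Real.log (2 * Real.sin x) := by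
      apply Real.log_le_log h4x
      rw [div_mul_eq_mul_div, div_le_iff₀ hpi] at hj
      rw [div_le_iff₀ hpi]
      linarith
    have h2 : Real.log (π / (4 * x)) ≤ π / (4 * x) - 1 :=
      Real.log_le_sub_one_of_pos (by positivity)
    have h3 : Real.log (π / (4 * x)) = - Real.log (4 * x / π) := by
      rw [← Real.log_inv]
      congr 1
      field_simp
    have h4 : π / (4 * x) ≤ π * Real.log 2 / (2 * x) := by
      rw [div_le_div_iff₀ (by positivity) (by positivity)]
      nlinarith [mul_pos hpi hx]
    nlinarith [h1, h2, h3, h4]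
  · -- upper bound
    have h1 : Real.log (2 * Real.sin x) ≤ Real.log 2 := by
      apply Real.log_le_log (by positivity)
      nlinarith [Real.sin_le_one x]
    have h2 : Real.log 2 ≤ π * Real.log 2 / (2 * x) := by
      rw [le_div_iff₀ (by positivity)]
      nlinarith
    linarith
end

section
/- For any real q with 0 ≤ q < 1, -log((q;q)_∞) ≤ q/(1-q)², where (q;q)_∞ = ∏_{k≥1}(1 - q^k). -/
theorem stmt_7 (q : ℝ) (hq0 : 0 ≤ q) (hq1 : q < 1) :
    -Real.log (∏' k : ℕ, (1 - q ^ (k + 1))) ≤ q / (1 - q) ^ 2 := by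
  have h1q : (0:ℝ) < 1 - q := by linarith
  have hpow : ∀ k : ℕ, q ^ (k + 1) < 1 := fun k =>
    pow_lt_one₀ hq0 hq1 (Nat.succ_ne_zero k)
  have hpos : ∀ k : ℕ, (0:ℝ) < 1 - q ^ (k + 1) := fun k => by
    have := hpow k; linarith
  have hpownn : ∀ k : ℕ, (0:ℝ) ≤ q ^ (k + 1) := fun k => pow_nonneg hq0 _
  -- bound: -log(1 - q^(k+1)) ≤ q^(k+1)/(1-q)
  have hbound : ∀ k : ℕ, -Real.log (1 - q ^ (k + 1)) ≤ q ^ (k + 1) / (1 - q) := by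
    intro k
    have h1 : -Real.log (1 - q ^ (k + 1)) = Real.log ((1 - q ^ (k + 1))⁻¹) := by
      rw [Real.log_inv]
    rw [h1]
    have h2 := Real.log_le_sub_one_of_pos (inv_pos.mpr (hpos k))
    have h3 : (1 - q ^ (k + 1))⁻¹ - 1 = q ^ (k + 1) / (1 - q ^ (k + 1)) := by
      rw [eq_div_iff (hpos k).ne', sub_mul, inv_mul_cancel₀ (hpos k).ne']
      ring
    rw [h3] at h2
    refine h2.trans ?_
    apply div_le_div_of_nonneg_left (hpownn k) h1q
    have : q ^ (k + 1) ≤ q := by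
      calc q ^ (k + 1) ≤ q ^ 1 := pow_le_pow_of_le_one hq0 hq1.le (by omega)
      _ = q := pow_one q
    linarith
  -- summability of the geometric bound
  have hgeom : Summable (fun k : ℕ => q ^ (k + 1) / (1 - q)) := by
    apply Summable.div_const
    exact ((summable_geometric_of_lt_one hq0 hq1).mul_left q).congr
      (fun k => by ring)
  have hgeomsum : ∑' k : ℕ, q ^ (k + 1) / (1 - q) = q / (1 - q) ^ 2 := by
    rw [tsum_div_const]
    have : ∑' k : ℕ, q ^ (k + 1) = q / (1 - q) := by
      have h := tsum_geometric_of_lt_one hq0 hq1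
      calc ∑' k : ℕ, q ^ (k + 1) = ∑' k : ℕ, q * q ^ k := by
            congr 1; ext k; ring
        _ = q * ∑' k : ℕ, q ^ k := tsum_mul_left
        _ = q * (1 - q)⁻¹ := by rw [h]
        _ = q / (1 - q) := by rw [div_eq_mul_inv]
    rw [this]; rw [div_div]; ring_nf
  -- summability of -log terms
  have hnlognn : ∀ k : ℕ, (0:ℝ) ≤ -Real.log (1 - q ^ (k + 1)) := by
    intro k
    have : Real.log (1 - q ^ (k + 1)) ≤ 0 :=
      Real.log_nonpos (hpos k).le (by have := hpownn k; linarith)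
    linarith
  have hsum : Summable (fun k : ℕ => -Real.log (1 - q ^ (k + 1))) :=
    Summable.of_nonneg_of_le hnlognn hbound hgeom
  have hsumlog : Summable (fun k : ℕ => Real.log (1 - q ^ (k + 1))) := by
    simpa using hsum.neg
  -- product equals exp of sum of logs
  have hprod : (∏' k : ℕ, (1 - q ^ (k + 1)))
      = Real.exp (∑' k : ℕ, Real.log (1 - q ^ (k + 1))) := by
    have := Real.rexp_tsum_eq_tprod (ι := ℕ)
      (f := fun k => 1 - q ^ (k + 1)) (fun k => hpos k) hsumlog
    exact this.symm
  rw [hprod, Real.log_exp, ← tsum_neg, ← hgeomsum]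
  exact Summable.tsum_le_tsum hbound hsum hgeom
end

section
/- Let k be a positive integer and θ an integer with 1 ≤ θ ≤ k. Then ∑_{α=1}^{k} cos(2παθ/k) · ζ(2, α/k) = (π²/6)·(6θ² - 6kθ + k²), where ζ(2, a) = ∑_{n≥0} 1/(n+a)² is the Hurwitz zeta function at s = 2. -/
open Real Finset

theorem stmt_9 (k : ℕ) (hk : 1 ≤ k) (θ : ℕ) (hθ1 : 1 ≤ θ) (hθk : θ ≤ k) :
    ∑ α ∈ Finset.Icc 1 k, Real.cos (2 * π * α * θ / k) *
        (∑' n : ℕ, 1 / ((n : ℝ) + (α : ℝ) / k) ^ 2) =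
      π ^ 2 / 6 * (6 * (θ : ℝ) ^ 2 - 6 * k * θ + k ^ 2) := by
  haveI : NeZero k := ⟨by omega⟩
  have hk0 : (k : ℝ) ≠ 0 := Nat.cast_ne_zero.mpr (by omega)
  set x : ℝ := (θ : ℝ) / k with hxdef
  have hx : x ∈ Set.Icc (0 : ℝ) 1 := by
    constructor
    · positivity
    · rw [hxdef, div_le_one (by positivity)]
      exact_mod_cast hθk
  have H := hasSum_one_div_nat_pow_mul_cos (k := 1) one_ne_zero hx
  set f : ℕ → ℝ := fun m => 1 / (m : ℝ) ^ 2 * Real.cos (2 * π * m * x) with hfdef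
  set C : ℝ := (-1 : ℝ) ^ (1 + 1) * (2 * π) ^ (2 * 1) / 2 / ((2 * 1).factorial : ℝ) *
      (Polynomial.map (algebraMap ℚ ℝ) (Polynomial.bernoulli (2 * 1))).eval x with hCdef
  have Hf : HasSum f C := H
  -- regroup by residue classes mod k
  have hsum : ∀ r : ℕ, Summable (fun n : ℕ => f (n * k + r)) := by
    intro r
    apply Hf.summable.comp_injective
    intro a b hab
    simp only at hab
    exact Nat.eq_of_mul_eq_mul_right (by omega) (Nat.add_right_cancel hab)
  set T : ℕ → ℝ := fun r => ∑' n : ℕ, f (n * k + r) with hTdef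
  have H2 : HasSum (f ∘ ((Equiv.prodComm (Fin k) ℕ).trans (Nat.divModEquiv k).symm)) C :=
    ((Equiv.prodComm (Fin k) ℕ).trans (Nat.divModEquiv k).symm).hasSum_iff.mpr Hf
  have H3 : HasSum (fun i : Fin k => T (i : ℕ)) C := by
    apply H2.prod_fiberwise
    intro i
    exact (hsum (i : ℕ)).hasSum
  have hC : C = ∑ i ∈ Finset.range k, T i := by
    rw [← Fin.sum_univ_eq_sum_range]
    exact H3.unique (hasSum_fintype _)
  -- T 0 = T k
  have hT0 : T 0 = T k := by
    have h0 : (fun n : ℕ => f (n * k + 0)) = fun n : ℕ => f (n * k) := by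
      funext n; rw [Nat.add_zero]
    have hsum0 : Summable fun n : ℕ => f (n * k) := by
      rw [← h0]; exact hsum 0
    have hf0 : f 0 = 0 := by simp [hfdef]
    calc T 0 = ∑' n : ℕ, f (n * k) := by rw [hTdef]; exact tsum_congr fun n => by rw [Nat.add_zero]
    _ = f (0 * k) + ∑' n : ℕ, f ((n + 1) * k) := (Summable.tsum_eq_zero_add hsum0)
    _ = ∑' n : ℕ, f (n * k + k) := by
        rw [Nat.zero_mul, hf0, zero_add]
        exact tsum_congr fun n => by rw [Nat.add_mul, Nat.one_mul]
    _ = T k := rfl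
  have hrange : ∑ i ∈ Finset.range k, T i = ∑ α ∈ Finset.Icc 1 k, T α := by
    rw [Finset.range_eq_Ico, Finset.sum_eq_sum_Ico_succ_bot (by omega : 0 < k),
      ← Finset.Ico_add_one_right_eq_Icc, Finset.sum_Ico_succ_top (by omega : 1 ≤ k), hT0]
    ring
  -- per-term identity
  have key : ∀ α ∈ Finset.Icc 1 k, Real.cos (2 * π * α * θ / k) *
      (∑' n : ℕ, 1 / ((n : ℝ) + (α : ℝ) / k) ^ 2) = (k : ℝ) ^ 2 * T α := by
    intro α hα
    simp only [Finset.mem_Icc] at hα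
    rw [hTdef, ← tsum_mul_left, ← tsum_mul_left]
    refine tsum_congr fun n => ?_
    have hpos : (0 : ℝ) < (n : ℝ) * k + α := by
      have : (1 : ℝ) ≤ (α : ℝ) := by exact_mod_cast hα.1
      positivity
    have hcos : Real.cos (2 * π * ((n * k + α : ℕ) : ℝ) * x) = Real.cos (2 * π * α * θ / k) := by
      have harg : 2 * π * ((n * k + α : ℕ) : ℝ) * x =
          2 * π * α * θ / k + ((n * θ : ℕ) : ℤ) * (2 * π) := by
        push_cast
        rw [hxdef]
        field_simp
        ring
      rw [harg, Real.cos_add_int_mul_two_pi]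
    have hf : f (n * k + α) = 1 / ((n : ℝ) * k + α) ^ 2 * Real.cos (2 * π * α * θ / k) := by
      rw [hfdef]
      simp only
      rw [hcos]
      push_cast
      ring_nf
    rw [hf]
    have h1 : (n : ℝ) + (α : ℝ) / k = ((n : ℝ) * k + α) / k := by field_simp
    rw [h1, div_pow, one_div_div]
    field_simp
  rw [Finset.sum_congr rfl key, ← Finset.mul_sum, ← hrange, ← hC, hCdef]
  have hb2 : _root_.bernoulli 2 = 1 / 6 := by
    rw [bernoulli_eq_bernoulli'_of_ne_one (by norm_num), bernoulli'_two]
  have hB : (Polynomial.map (algebraMap ℚ ℝ) (Polynomial.bernoulli (2 * 1))).eval x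
      = x ^ 2 - x + 1 / 6 := by
    simp [Polynomial.bernoulli, Finset.sum_range_succ, hb2, bernoulli_one]
    ring
  rw [hB, hxdef]
  have hfact : (((2 * 1).factorial : ℝ)) = 2 := by norm_num [Nat.factorial]
  rw [hfact]
  field_simp
  ring
end

section
/- Let k be a positive integer and θ an integer with 1 ≤ θ ≤ k-1. Then ∑_{α=1}^{k} cos(2παθ/k) · ψ(α/k) = k·log(2 sin(πθ/k)), where ψ is the digamma function. -/
open Real Finset

/-- The digamma function `ψ = Γ'/Γ`. -/
noncomputable def digamma (x : ℝ) : ℝ := deriv Real.Gamma x / Real.Gamma x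


lemma diffGamma {x : ℝ} (hx : 0 < x) : DifferentiableAt ℝ Real.Gamma x :=
  Real.differentiableAt_Gamma (fun m h => by
    rw [h] at hx
    have : (0:ℝ) ≤ (m:ℝ) := Nat.cast_nonneg m
    linarith)

lemma digamma_add_one {x : ℝ} (hx : 0 < x) : digamma (x + 1) = digamma x + 1 / x := by
  have hΓ := Real.Gamma_pos_of_pos hx
  have h1 : HasDerivAt (fun y => Real.Gamma (y + 1)) (deriv Real.Gamma (x + 1)) x := by
    simpa [Function.comp_def] using (HasDerivAt.comp x (diffGamma (by linarith : (0:ℝ) < x + 1)).hasDerivAt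
      ((hasDerivAt_id x).add_const 1))
  have h2 : HasDerivAt (fun y => y * Real.Gamma y)
      (Real.Gamma x + x * deriv Real.Gamma x) x := by
    refine ((hasDerivAt_id' x).mul (diffGamma hx).hasDerivAt).congr_deriv ?_; ring
  have heq : (fun y => Real.Gamma (y + 1)) =ᶠ[nhds x] (fun y => y * Real.Gamma y) := by
    filter_upwards [eventually_gt_nhds hx] with y hy
    exact Real.Gamma_add_one hy.ne'
  have h3 : deriv Real.Gamma (x + 1) = Real.Gamma x + x * deriv Real.Gamma x :=
    (h1.congr_of_eventuallyEq heq.symm).unique h2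
  have hΓ1 : Real.Gamma (x + 1) = x * Real.Gamma x := Real.Gamma_add_one hx.ne'
  rw [digamma, digamma, h3, hΓ1]
  field_simp
  ring

lemma hasDerivAt_logGamma {x : ℝ} (hx : 0 < x) :
    HasDerivAt (Real.log ∘ Real.Gamma) (digamma x) x := by
  have hΓ := Real.Gamma_pos_of_pos hx
  have := (Real.hasDerivAt_log hΓ.ne').comp x (diffGamma hx).hasDerivAt
  simpa [digamma, div_eq_inv_mul] using this

lemma digamma_mono {x y : ℝ} (hx : 0 < x) (hxy : x ≤ y) : digamma x ≤ digamma y := by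
  rcases eq_or_lt_of_le hxy with rfl | hlt
  · exact le_rfl
  have hy : 0 < y := hx.trans hlt
  have h1 := Real.convexOn_log_Gamma.le_slope_of_hasDerivAt (Set.mem_Ioi.2 hx)
    (Set.mem_Ioi.2 hy) hlt (hasDerivAt_logGamma hx)
  have h2 := Real.convexOn_log_Gamma.slope_le_of_hasDerivAt (Set.mem_Ioi.2 hx)
    (Set.mem_Ioi.2 hy) hlt (hasDerivAt_logGamma hy)
  exact h1.trans h2

lemma digamma_add_nat {x : ℝ} (hx : 0 < x) (n : ℕ) :
    digamma (x + n) = digamma x + ∑ i ∈ range n, 1 / (x + i) := by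
  induction n with
  | zero => simp
  | succ n ih =>
    have h : x + (n + 1 : ℕ) = (x + n) + 1 := by push_cast; ring
    rw [h, digamma_add_one (by positivity), ih, Finset.sum_range_succ]
    ring

lemma tendsto_digamma_diff {x y : ℝ} (hx : 0 < x) (hxy : x ≤ y) (hyx : y ≤ x + 1) :
    Filter.Tendsto (fun n : ℕ => digamma (y + n) - digamma (x + n)) Filter.atTop (nhds 0) := by
  have h0 : ∀ n : ℕ, 0 ≤ digamma (y + n) - digamma (x + n) := fun n =>
    sub_nonneg.2 (digamma_mono (by positivity) (by linarith))
  have h1 : ∀ n : ℕ, digamma (y + n) - digamma (x + n) ≤ 1 / (x + n) := by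
    intro n
    have hyn : (0:ℝ) < y + n := by have := (Nat.cast_nonneg n : (0:ℝ) ≤ n); linarith
    have := digamma_mono hyn (show y + (n:ℝ) ≤ (x + n) + 1 by linarith)
    have he : digamma ((x + n) + 1) = digamma (x + n) + 1 / (x + n) :=
      digamma_add_one (by positivity)
    linarith
  have hlim : Filter.Tendsto (fun n : ℕ => 1 / (x + n)) Filter.atTop (nhds 0) := by
    have h := (Filter.tendsto_atTop_add_const_left _ x
      (tendsto_natCast_atTop_atTop (R := ℝ)))
    simpa [one_div, Function.comp_def] using tendsto_inv_atTop_zero.comp h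
  exact squeeze_zero h0 h1 hlim

/-- partial-sum formula: ψ(y) - ψ(x) as a limit, for 0 < x ≤ y ≤ x+1 -/
lemma digamma_sub_eq_lim {x y : ℝ} (hx : 0 < x) (hxy : x ≤ y) (hyx : y ≤ x + 1) :
    Filter.Tendsto (fun N : ℕ => ∑ i ∈ range N, (1 / (x + i) - 1 / (y + i)))
      Filter.atTop (nhds (digamma y - digamma x)) := by
  have hy : 0 < y := lt_of_lt_of_le hx hxy
  have key : ∀ N : ℕ, ∑ i ∈ range N, (1 / (x + i) - 1 / (y + i)) =
      (digamma y - digamma x) - (digamma (y + N) - digamma (x + N)) := by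
    intro N
    have h1 := digamma_add_nat hx N
    have h2 := digamma_add_nat hy N
    rw [Finset.sum_sub_distrib]
    linarith
  simp_rw [key]
  simpa using tendsto_const_nhds.sub (tendsto_digamma_diff hx hxy hyx)

section kernel
variable (φ : ℝ)

/-- partial Fourier kernel -/
noncomputable def Dker (M : ℕ) (t : ℝ) : ℝ := ∑ m ∈ range M, Real.cos ((m+1) * φ) * t ^ m

noncomputable def qden (t : ℝ) : ℝ := 1 - 2 * t * Real.cos φ + t ^ 2

lemma qden_ge {t : ℝ} (ht0 : 0 ≤ t) (ht1 : t ≤ 1) :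
    min (1 - Real.cos φ) (1/4) ≤ qden φ t := by
  have hc := Real.cos_le_one φ
  have hc' := Real.neg_one_le_cos φ
  rcases le_or_gt t (1/2) with h | h
  · calc min (1 - Real.cos φ) (1/4) ≤ 1/4 := min_le_right _ _
      _ ≤ qden φ t := by
        have : qden φ t = (1 - t)^2 + 2 * t * (1 - Real.cos φ) := by unfold qden; ring
        nlinarith
  · calc min (1 - Real.cos φ) (1/4) ≤ 1 - Real.cos φ := min_le_left _ _
      _ ≤ qden φ t := by
        have : qden φ t = (1 - t)^2 + 2 * t * (1 - Real.cos φ) := by unfold qden; ring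
        nlinarith

lemma qden_pos (hφ : Real.cos φ < 1) {t : ℝ} (ht0 : 0 ≤ t) (ht1 : t ≤ 1) : 0 < qden φ t :=
  lt_of_lt_of_le (lt_min (by linarith) (by norm_num)) (qden_ge φ ht0 ht1)

lemma Dker_mul_qden (M : ℕ) (t : ℝ) :
    Dker φ M t * qden φ t =
      Real.cos φ - t + t ^ M * (t * Real.cos (M * φ) - Real.cos ((M+1) * φ)) := by
  induction M with
  | zero => simp [Dker, qden]
  | succ M ih =>
    have hsum : Dker φ (M+1) t = Dker φ M t + Real.cos ((M+1) * φ) * t ^ M := by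
      unfold Dker; rw [Finset.sum_range_succ]
    have h1 : Real.cos ((M+1) * φ + φ) =
        Real.cos ((M+1)*φ) * Real.cos φ - Real.sin ((M+1)*φ) * Real.sin φ := Real.cos_add _ _
    have h2 : Real.cos ((M+1) * φ - φ) =
        Real.cos ((M+1)*φ) * Real.cos φ + Real.sin ((M+1)*φ) * Real.sin φ := Real.cos_sub _ _
    have e1 : ((M:ℝ)+1) * φ + φ = ((M+1:ℕ)+1) * φ := by push_cast; ring
    have e2 : ((M:ℝ)+1) * φ - φ = (M:ℝ) * φ := by ring
    rw [e1] at h1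
    rw [e2] at h2
    rw [hsum, add_mul, ih]
    unfold qden
    push_cast at h1 h2 ⊢
    linear_combination t^(M+1) * h1 + t^(M+1) * h2

lemma integral_Dker (M : ℕ) :
    ∫ t in (0:ℝ)..1, Dker φ M t = ∑ m ∈ range M, Real.cos ((m+1)*φ) / (m+1) := by
  unfold Dker
  rw [intervalIntegral.integral_finset_sum]
  · refine Finset.sum_congr rfl fun m _ => ?_
    rw [intervalIntegral.integral_const_mul, integral_pow]
    push_cast
    ring
  · intro m _
    exact (Continuous.intervalIntegrable (by continuity) 0 1)

lemma contOn_qden_inv_aux (hφ : Real.cos φ < 1) (f : ℝ → ℝ) (hf : Continuous f) :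
    ContinuousOn (fun t => f t / qden φ t) (Set.uIcc (0:ℝ) 1) := by
  apply ContinuousOn.div hf.continuousOn
  · exact (by unfold qden; continuity : Continuous (qden φ)).continuousOn
  · intro t ht
    rw [Set.uIcc_of_le (by norm_num : (0:ℝ) ≤ 1)] at ht
    exact (qden_pos φ hφ ht.1 ht.2).ne'

lemma hasDerivAt_qden (t : ℝ) : HasDerivAt (qden φ) (2*t - 2*Real.cos φ) t := by
  unfold qden
  have h1 : HasDerivAt (fun u : ℝ => 1 - 2 * u * Real.cos φ + u ^ 2)
      (0 - 2 * Real.cos φ + 2 * t) t := by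
    apply HasDerivAt.add
    · apply HasDerivAt.sub (hasDerivAt_const t 1)
      simpa [mul_comm, mul_assoc] using (hasDerivAt_id t).const_mul (2 * Real.cos φ)
    · simpa using hasDerivAt_pow 2 t
  convert h1 using 1
  ring

lemma integral_gfun (hφ : Real.cos φ < 1) :
    ∫ t in (0:ℝ)..1, (Real.cos φ - t) / qden φ t
      = -(1/2) * Real.log (2 - 2*Real.cos φ) := by
  have hd : ∀ t ∈ Set.uIcc (0:ℝ) 1,
      HasDerivAt (fun u => -(1/2) * Real.log (qden φ u)) ((Real.cos φ - t)/qden φ t) t := by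
    intro t ht
    rw [Set.uIcc_of_le (by norm_num : (0:ℝ) ≤ 1)] at ht
    have hq := qden_pos φ hφ ht.1 ht.2
    have h2 := ((Real.hasDerivAt_log hq.ne').comp t (hasDerivAt_qden φ t)).const_mul (-(1/2))
    refine h2.congr_deriv ?_
    field_simp
    ring
  have hint : IntervalIntegrable (fun t => (Real.cos φ - t)/qden φ t) MeasureTheory.volume 0 1 :=
    (contOn_qden_inv_aux φ hφ _ (by continuity)).intervalIntegrable
  rw [intervalIntegral.integral_eq_sub_of_hasDerivAt hd hint]
  have h0 : qden φ 0 = 1 := by unfold qden; ring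
  have h1 : qden φ 1 = 2 - 2 * Real.cos φ := by unfold qden; ring
  rw [h0, h1, Real.log_one]
  ring
end kernel


section kernel2
variable (φ : ℝ)
lemma Dker_sub_g (hφ : Real.cos φ < 1) {t : ℝ} (ht0 : 0 ≤ t) (ht1 : t ≤ 1) (M : ℕ) :
    Dker φ M t - (Real.cos φ - t)/qden φ t
      = t ^ M * (t * Real.cos (M * φ) - Real.cos ((M+1) * φ)) / qden φ t := by
  have hq := (qden_pos φ hφ ht0 ht1).ne'
  field_simp
  linear_combination (norm := ring_nf) Dker_mul_qden φ M t

lemma abs_Dker_sub_g (hφ : Real.cos φ < 1) {t : ℝ} (ht0 : 0 ≤ t) (ht1 : t ≤ 1) (M : ℕ) :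
    |Dker φ M t - (Real.cos φ - t)/qden φ t|
      ≤ 2 / min (1 - Real.cos φ) (1/4) * t ^ M := by
  set c := min (1 - Real.cos φ) (1/4) with hcdef
  have hc : 0 < c := lt_min (by linarith) (by norm_num)
  have hq := qden_pos φ hφ ht0 ht1
  have hqc : c ≤ qden φ t := qden_ge φ ht0 ht1
  rw [Dker_sub_g φ hφ ht0 ht1 M]
  rw [abs_div, abs_of_pos hq]
  have hnum : |t ^ M * (t * Real.cos (M * φ) - Real.cos ((M+1) * φ))| ≤ 2 * t ^ M := by
    rw [abs_mul, abs_pow, abs_of_nonneg ht0]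
    have h1 : |t * Real.cos (M * φ) - Real.cos ((M+1) * φ)| ≤ 2 := by
      have := Real.abs_cos_le_one (M * φ)
      have := Real.abs_cos_le_one (((M:ℝ)+1) * φ)
      have ha : |t * Real.cos (M * φ)| ≤ 1 := by
        rw [abs_mul, abs_of_nonneg ht0]
        nlinarith [abs_nonneg (Real.cos (M*φ))]
      calc |t * Real.cos (M * φ) - Real.cos ((M+1) * φ)|
          ≤ |t * Real.cos (M * φ)| + |Real.cos ((M+1) * φ)| := abs_sub _ _
        _ ≤ 2 := by linarith
    nlinarith [pow_nonneg ht0 M]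
  calc |t ^ M * (t * Real.cos (M * φ) - Real.cos ((M+1) * φ))| / qden φ t
      ≤ 2 * t ^ M / c := by
        apply div_le_div₀ (by positivity) hnum hc hqc
    _ = 2 / c * t ^ M := by ring

lemma tendsto_sum_cos (hφ : Real.cos φ < 1) :
    Filter.Tendsto (fun M : ℕ => ∑ m ∈ range M, Real.cos ((m+1)*φ)/(m+1)) Filter.atTop
      (nhds (-(1/2) * Real.log (2 - 2*Real.cos φ))) := by
  set c := min (1 - Real.cos φ) (1/4) with hcdef
  have hc : 0 < c := lt_min (by linarith) (by norm_num)
  rw [tendsto_iff_norm_sub_tendsto_zero]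
  have key : ∀ M : ℕ, ‖(∑ m ∈ range M, Real.cos ((m+1)*φ)/(m+1))
      - (-(1/2) * Real.log (2 - 2*Real.cos φ))‖ ≤ (2/c) / (M+1) := by
    intro M
    have hcont : Continuous (Dker φ M) := by unfold Dker; continuity
    have hg : IntervalIntegrable (fun t => (Real.cos φ - t)/qden φ t)
        MeasureTheory.volume 0 1 :=
      (contOn_qden_inv_aux φ hφ _ (by continuity)).intervalIntegrable
    have hD : IntervalIntegrable (Dker φ M) MeasureTheory.volume 0 1 :=
      hcont.intervalIntegrable 0 1
    rw [Real.norm_eq_abs, ← integral_Dker, ← integral_gfun φ hφ,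
      ← intervalIntegral.integral_sub hD hg]
    calc |∫ t in (0:ℝ)..1, (Dker φ M t - (Real.cos φ - t)/qden φ t)|
        ≤ ∫ t in (0:ℝ)..1, |Dker φ M t - (Real.cos φ - t)/qden φ t| :=
          intervalIntegral.abs_integral_le_integral_abs (by norm_num)
      _ ≤ ∫ t in (0:ℝ)..1, 2/c * t ^ M := by
          apply intervalIntegral.integral_mono_on (by norm_num)
          · apply IntervalIntegrable.abs
            exact hD.sub hg
          · exact (Continuous.intervalIntegrable (by continuity) 0 1)
          · intro t ht
            exact abs_Dker_sub_g φ hφ ht.1 ht.2 M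
      _ = (2/c) / (M+1) := by
          rw [intervalIntegral.integral_const_mul, integral_pow]
          push_cast
          field_simp
          simp
  have hlim : Filter.Tendsto (fun M : ℕ => (2/c) / (M+1)) Filter.atTop (nhds 0) := by
    apply Filter.Tendsto.div_atTop tendsto_const_nhds
    exact Filter.tendsto_atTop_add_const_right _ 1 tendsto_natCast_atTop_atTop
  exact squeeze_zero (fun M => norm_nonneg _) key hlim
end kernel2

theorem stmt_11 (k : ℕ) (hk : 2 ≤ k) (θ : ℕ) (hθ1 : 1 ≤ θ) (hθk : θ ≤ k - 1) :
    ∑ α ∈ Finset.Icc 1 k, Real.cos (2 * π * α * θ / k) * digamma ((α : ℝ) / k) =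
      k * Real.log (2 * Real.sin (π * θ / k)) := by
  have hk0 : (0:ℝ) < k := by positivity
  have hkc : (k:ℂ) ≠ 0 := Nat.cast_ne_zero.2 (by omega)
  have hθk' : (θ:ℝ) < k := by
    have : θ < k := lt_of_le_of_lt hθk (Nat.sub_lt (by omega) one_pos)
    exact_mod_cast this
  have hθ0 : (0:ℝ) < θ := by exact_mod_cast hθ1
  set φ : ℝ := 2 * π * θ / k with hφdef
  have hang : ∀ α : ℕ, 2 * π * (α:ℝ) * θ / k = α * φ := fun α => by rw [hφdef]; ring
  have hhalf : φ / 2 = π * θ / k := by rw [hφdef]; ring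
  have hsin : 0 < Real.sin (π * θ / k) := by
    apply Real.sin_pos_of_pos_of_lt_pi
    · positivity
    · rw [div_lt_iff₀ hk0]
      have := Real.pi_pos
      nlinarith
  have h4 : 2 - 2 * Real.cos φ = (2 * Real.sin (π * θ / k))^2 := by
    have h1 : Real.cos (2 * (φ/2)) = Real.cos (φ/2)^2 - Real.sin (φ/2)^2 :=
      Real.cos_two_mul' (φ/2)
    have h2 : Real.sin (φ/2)^2 + Real.cos (φ/2)^2 = 1 := Real.sin_sq_add_cos_sq _
    have h3 : 2 * (φ/2) = φ := by ring
    rw [h3] at h1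
    rw [← hhalf]
    nlinarith
  have hcos : Real.cos φ < 1 := by nlinarith
  -- periodicity
  have hper : ∀ n α : ℕ, Real.cos (((n*k+α : ℕ):ℝ) * φ) = Real.cos ((α:ℝ)*φ) := by
    intro n α
    have he : ((n*k+α : ℕ):ℝ) * φ = (α:ℝ)*φ + ((n*θ : ℕ):ℤ) * (2*π) := by
      push_cast
      rw [hφdef]
      field_simp
      ring
    rw [he, Real.cos_add_int_mul_two_pi]
  -- Step A : sum of cosines vanishes
  have hA : ∑ α ∈ Icc 1 k, Real.cos ((α:ℝ) * φ) = 0 := by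
    set z := Complex.exp (φ * Complex.I) with hzdef
    have hzpow : ∀ α : ℕ, (z ^ α).re = Real.cos ((α:ℝ)*φ) := by
      intro α
      rw [hzdef, ← Complex.exp_nat_mul]
      rw [show (α:ℂ) * (↑φ * Complex.I) = ((α:ℝ)*φ : ℝ) * Complex.I by push_cast; ring]
      exact Complex.exp_ofReal_mul_I_re _
    have hzk : z ^ k = 1 := by
      rw [hzdef, ← Complex.exp_nat_mul]
      rw [show (k:ℂ) * (↑φ * Complex.I) = (θ:ℤ) * (2 * ↑π * Complex.I) by
        push_cast [hφdef]; field_simp [hkc]]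
      exact Complex.exp_int_mul_two_pi_mul_I θ
    have hz1 : z ≠ 1 := by
      rw [hzdef, Ne, Complex.exp_eq_one_iff]
      rintro ⟨n, hn⟩
      have him : φ = (n:ℝ) * (2*π) := by
        have := congrArg Complex.im hn
        simpa using this
      have hφ0 : 0 < φ := by rw [hφdef]; positivity
      have hφ2 : φ < 2*π := by
        rw [hφdef, div_lt_iff₀ hk0]
        have := Real.pi_pos
        nlinarith
      have hπ := Real.pi_pos
      rcases le_or_gt n 0 with h | h
      · have : (n:ℝ) ≤ 0 := by exact_mod_cast h
        nlinarith
      · have : (1:ℝ) ≤ n := by exact_mod_cast h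
        nlinarith
    have hsum : ∑ α ∈ Icc 1 k, z ^ α = 0 := by
      have h : ∑ α ∈ Icc 1 k, z ^ α = z * ∑ α ∈ range k, z ^ α := by
        rw [← Finset.Ico_add_one_right_eq_Icc, Finset.sum_Ico_eq_sum_range]
        simp only [Nat.succ_sub_one, Nat.add_sub_cancel]
        rw [Finset.mul_sum]
        exact Finset.sum_congr rfl fun i _ => by ring
      rw [h, geom_sum_eq hz1, hzk]
      simp
    calc ∑ α ∈ Icc 1 k, Real.cos ((α:ℝ) * φ) = (∑ α ∈ Icc 1 k, z ^ α).re := by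
          rw [Complex.re_sum]
          exact Finset.sum_congr rfl fun α _ => (hzpow α).symm
      _ = 0 := by rw [hsum]; simp
  -- Step D : block sums
  have e1 : ∀ n : ℕ, Icc 1 n = Ioc 0 n := fun n => by
    rw [show (1:ℕ) = 0 + 1 from rfl, Finset.Icc_add_one_left_eq_Ioc]
  have hblock : ∀ (f : ℕ → ℝ) (N : ℕ),
      ∑ α ∈ Icc 1 k, f (N*k+α) = ∑ m ∈ Ioc (N*k) ((N+1)*k), f m := by
    intro f N
    have e2 : Ioc (N*k) ((N+1)*k) = Ico (N*k+1) ((N+1)*k+1) := by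
      rw [← Finset.Icc_add_one_left_eq_Ioc, Finset.Ico_add_one_right_eq_Icc]
    rw [e2, Finset.sum_Ico_eq_sum_range, ← Finset.Ico_add_one_right_eq_Icc,
      Finset.sum_Ico_eq_sum_range]
    simp only [Nat.add_sub_cancel,
      show (N+1)*k+1 - (N*k+1) = k by rw [Nat.succ_mul]; omega]
    exact Finset.sum_congr rfl fun i _ => by congr 1; omega
  have hD : ∀ (f : ℕ → ℝ) (N : ℕ),
      ∑ n ∈ range N, ∑ α ∈ Icc 1 k, f (n*k+α) = ∑ m ∈ Icc 1 (N*k), f m := by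
    intro f N
    induction N with
    | zero => simp
    | succ N ih =>
      rw [Finset.sum_range_succ, ih]
      calc ∑ m ∈ Icc 1 (N*k), f m + ∑ α ∈ Icc 1 k, f (N*k+α)
          = ∑ m ∈ Ioc 0 (N*k), f m + ∑ m ∈ Ioc (N*k) ((N+1)*k), f m := by
            rw [e1 (N*k), hblock]
        _ = ∑ m ∈ Ioc 0 ((N+1)*k), f m :=
            Finset.sum_Ioc_consecutive f (Nat.zero_le _)
              (Nat.mul_le_mul_right k (Nat.le_succ N))
        _ = ∑ m ∈ Icc 1 ((N+1)*k), f m := by rw [e1]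
  -- per-α limits
  set L := -(1/2) * Real.log (2 - 2*Real.cos φ) with hLdef
  set SN : ℕ → ℝ := fun N => ∑ α ∈ Icc 1 k, Real.cos ((α:ℝ)*φ) *
      ∑ i ∈ range N, (1/(1+(i:ℝ)) - 1/((α:ℝ)/k+(i:ℝ))) with hSNdef
  have hlim1 : Filter.Tendsto SN Filter.atTop
      (nhds (∑ α ∈ Icc 1 k, Real.cos ((α:ℝ)*φ) * (digamma ((α:ℝ)/k) - digamma 1))) := by
    apply tendsto_finset_sum
    intro α hα
    rw [Finset.mem_Icc] at hα
    have hx : 0 < (α:ℝ)/k := by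
      have : (0:ℝ) < α := by exact_mod_cast hα.1
      positivity
    have hxy : (α:ℝ)/k ≤ 1 := by
      rw [div_le_one hk0]
      exact_mod_cast hα.2
    have h1 := ((digamma_sub_eq_lim hx hxy (by linarith)).const_mul
      (Real.cos ((α:ℝ)*φ))).neg
    have heq2 : ∀ N : ℕ,
        -(Real.cos ((α:ℝ)*φ) * ∑ i ∈ range N, (1/((α:ℝ)/k+(i:ℝ)) - 1/(1+(i:ℝ))))
        = Real.cos ((α:ℝ)*φ) * ∑ i ∈ range N, (1/(1+(i:ℝ)) - 1/((α:ℝ)/k+(i:ℝ))) := by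
      intro N
      simp only [Finset.mul_sum]
      rw [← Finset.sum_neg_distrib]
      exact Finset.sum_congr rfl fun i _ => by ring
    have hval : Real.cos ((α:ℝ)*φ) * (digamma ((α:ℝ)/k) - digamma 1)
        = -(Real.cos ((α:ℝ)*φ) * (digamma 1 - digamma ((α:ℝ)/k))) := by ring
    rw [hval]
    exact h1.congr heq2
  -- identify SN with cosine partial sums
  have hSN_eq : ∀ N : ℕ, SN N = -((k:ℝ) * ∑ m ∈ range (N*k), Real.cos (((m:ℝ)+1)*φ)/((m:ℝ)+1)) := by
    intro N
    have split : SN N = (∑ α ∈ Icc 1 k, Real.cos ((α:ℝ)*φ)) * (∑ i ∈ range N, 1/(1+(i:ℝ)))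
        - ∑ α ∈ Icc 1 k, Real.cos ((α:ℝ)*φ) * ∑ i ∈ range N, 1/((α:ℝ)/k+(i:ℝ)) := by
      simp only [hSNdef]
      rw [Finset.sum_mul, ← Finset.sum_sub_distrib]
      refine Finset.sum_congr rfl fun α _ => ?_
      rw [Finset.sum_sub_distrib]
      ring
    rw [split, hA, zero_mul, zero_sub]
    congr 1
    have step1 : ∀ α ∈ Icc 1 k, Real.cos ((α:ℝ)*φ) * ∑ i ∈ range N, 1/((α:ℝ)/k+(i:ℝ))
        = ∑ i ∈ range N, (Real.cos (((i*k+α : ℕ):ℝ)*φ)/((i*k+α : ℕ):ℝ)) * k := by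
      intro α hα
      rw [Finset.mem_Icc] at hα
      rw [Finset.mul_sum]
      refine Finset.sum_congr rfl fun i _ => ?_
      rw [hper i α]
      have hpos : (0:ℝ) < ((i*k+α : ℕ):ℝ) := by
        have : 0 < i*k+α := by omega
        exact_mod_cast this
      have hx : (α:ℝ)/k + (i:ℝ) = ((i*k+α : ℕ):ℝ)/k := by
        push_cast
        field_simp
        ring
      rw [hx, one_div_div]
      ring
    rw [Finset.sum_congr rfl step1, Finset.sum_comm]
    rw [show (∑ i ∈ range N, ∑ α ∈ Icc 1 k,
        (Real.cos (((i*k+α : ℕ):ℝ)*φ)/((i*k+α : ℕ):ℝ)) * k)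
      = ∑ i ∈ range N, ∑ α ∈ Icc 1 k,
        ((fun m : ℕ => (Real.cos ((m:ℝ)*φ)/((m:ℝ))) * k) (i*k+α)) from rfl]
    rw [hD (fun m : ℕ => (Real.cos ((m:ℝ)*φ)/((m:ℝ))) * k) N]
    rw [← Finset.Ico_add_one_right_eq_Icc, Finset.sum_Ico_eq_sum_range]
    simp only [Nat.succ_sub_one, Nat.add_sub_cancel]
    rw [Finset.mul_sum]
    refine Finset.sum_congr rfl fun m _ => ?_
    push_cast
    ring
  have hlim2 : Filter.Tendsto SN Filter.atTop (nhds (-((k:ℝ) * L))) := by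
    have hmul : Filter.Tendsto (fun N : ℕ => N*k) Filter.atTop Filter.atTop :=
      Filter.tendsto_atTop_mono (fun n => Nat.le_mul_of_pos_right n (by omega))
        Filter.tendsto_id
    have := (((tendsto_sum_cos φ hcos).comp hmul).const_mul (k:ℝ)).neg
    rw [← hLdef] at this
    exact this.congr fun N => (hSN_eq N).symm
  have hSval := tendsto_nhds_unique hlim1 hlim2
  have hfin : ∑ α ∈ Icc 1 k, Real.cos ((α:ℝ)*φ) * digamma ((α:ℝ)/k) = -((k:ℝ)*L) := by
    rw [← hSval]
    rw [show (∑ α ∈ Icc 1 k, Real.cos ((α:ℝ)*φ) * (digamma ((α:ℝ)/k) - digamma 1))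
      = ∑ α ∈ Icc 1 k, (Real.cos ((α:ℝ)*φ) * digamma ((α:ℝ)/k)
        - Real.cos ((α:ℝ)*φ) * digamma 1) from Finset.sum_congr rfl fun α _ => by ring]
    rw [Finset.sum_sub_distrib, ← Finset.sum_mul, hA]
    ring
  calc ∑ α ∈ Finset.Icc 1 k, Real.cos (2 * π * α * θ / k) * digamma ((α : ℝ) / k)
      = ∑ α ∈ Icc 1 k, Real.cos ((α:ℝ)*φ) * digamma ((α:ℝ)/k) :=
        Finset.sum_congr rfl fun α _ => by rw [hang α]
    _ = -((k:ℝ)*L) := hfin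
    _ = k * Real.log (2 * Real.sin (π * θ / k)) := by
        rw [hLdef, h4, Real.log_pow]
        push_cast
        ring
end

section
/- Let k be a positive integer and θ an integer with 1 ≤ θ ≤ k-1. Then ∑_{α=1}^{k} sin(2παθ/k) · ψ(α/k) = (π/2)·(2θ - k), where ψ is the digamma function. -/
open Real Finset

lemma digamma_reflect {x : ℝ} (h0 : 0 < x) (h1 : x < 1) :
    digamma x - digamma (1 - x) = -π * (Real.cos (π * x) / Real.sin (π * x)) := by
  have hs : Real.sin (π * x) ≠ 0 := by
    apply ne_of_gt
    apply Real.sin_pos_of_pos_of_lt_pi (by positivity)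
    nlinarith [Real.pi_pos]
  have hB : Real.Gamma x ≠ 0 := (Real.Gamma_pos_of_pos h0).ne'
  have hD : Real.Gamma (1 - x) ≠ 0 := (Real.Gamma_pos_of_pos (by linarith)).ne'
  have hd1 : ∀ m : ℕ, x ≠ -m := fun m =>
    ne_of_gt (by have := Nat.cast_nonneg (α := ℝ) m; linarith)
  have hd2 : ∀ m : ℕ, (1 - x) ≠ -m := fun m =>
    ne_of_gt (by have := Nat.cast_nonneg (α := ℝ) m; linarith)
  have h1' : HasDerivAt Real.Gamma (deriv Real.Gamma x) x :=
    (Real.differentiableAt_Gamma hd1).hasDerivAt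
  have h2' : HasDerivAt (fun y => Real.Gamma (1 - y)) (deriv Real.Gamma (1 - x) * (-1)) x :=
    (Real.differentiableAt_Gamma hd2).hasDerivAt.comp x ((hasDerivAt_id x).const_sub 1)
  have prod : HasDerivAt (fun y => Real.Gamma y * Real.Gamma (1 - y))
      (deriv Real.Gamma x * Real.Gamma (1 - x) + Real.Gamma x * (deriv Real.Gamma (1 - x) * (-1))) x :=
    h1'.mul h2'
  have hsin : HasDerivAt (fun y => Real.sin (π * y)) (Real.cos (π * x) * π) x := by
    simpa using ((hasDerivAt_id x).const_mul π).sin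
  have rhs : HasDerivAt (fun y => π / Real.sin (π * y))
      (π * (-(Real.cos (π * x) * π) / (Real.sin (π * x))^2)) x := by
    simpa [div_eq_mul_inv] using (hsin.inv hs).const_mul π
  have hfun : (fun y => Real.Gamma y * Real.Gamma (1 - y)) = (fun y => π / Real.sin (π * y)) :=
    funext fun y => Real.Gamma_mul_Gamma_one_sub y
  rw [hfun] at prod
  have key := rhs.unique prod
  have hΓ : Real.Gamma x * Real.Gamma (1 - x) = π / Real.sin (π * x) :=
    Real.Gamma_mul_Gamma_one_sub x
  have hval : deriv Real.Gamma x * Real.Gamma (1 - x) - Real.Gamma x * deriv Real.Gamma (1 - x)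
      = -(π^2 * Real.cos (π*x)) / Real.sin (π*x)^2 := by
    rw [eq_div_iff (pow_ne_zero 2 hs)]
    field_simp at key
    linear_combination -key
  unfold digamma
  rw [div_sub_div _ _ hB hD, hval, hΓ]
  field_simp

lemma cot_sin_identity (x : ℝ) : ∀ θ : ℕ, 1 ≤ θ →
    Real.cos x * Real.sin (2 * θ * x) =
      Real.sin x * (1 + Real.cos (2 * θ * x) + 2 * ∑ j ∈ Finset.Icc 1 (θ - 1), Real.cos (2 * j * x)) := by
  intro θ
  induction θ with
  | zero => intro h; omega
  | succ n ih =>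
    intro _
    rcases Nat.eq_zero_or_pos n with hn | hn
    · subst hn
      norm_num
      rw [Real.sin_two_mul, Real.cos_two_mul]
      ring
    · have IH := ih hn
      have hn1 : ((n - 1 : ℕ) + 1 : ℕ) = n := by omega
      rw [show (n + 1 : ℕ) - 1 = (n - 1) + 1 from by omega,
        Finset.sum_Icc_succ_top (by omega : 1 ≤ (n-1)+1), hn1]
      push_cast
      rw [show (2 * ((n:ℝ)+1) * x) = 2*(n:ℝ)*x + 2*x from by ring,
        Real.sin_add, Real.cos_add, Real.sin_two_mul, Real.cos_two_mul]
      have hpy := Real.sin_sq_add_cos_sq x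
      linear_combination (2*Real.cos x^2 - 1 + 2*Real.sin x^2) * IH +
        2*Real.sin x*(1 + Real.cos (2*(n:ℝ)*x) +
          2*∑ j ∈ Finset.Icc 1 (n-1), Real.cos (2*(j:ℝ)*x)) * hpy

lemma cos_sum_eq_neg_one {k j : ℕ} (hj0 : 0 < j) (hjk : j < k) :
    ∑ α ∈ Finset.Icc 1 (k - 1), Real.cos (2 * π * j * α / k) = -1 := by
  have hk0 : 0 < k := lt_trans hj0 hjk
  have hkC : (k : ℂ) ≠ 0 := Nat.cast_ne_zero.mpr hk0.ne'
  have hπC : (π : ℂ) ≠ 0 := Complex.ofReal_ne_zero.mpr Real.pi_ne_zero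
  have h2πI : (2 * (π:ℂ) * Complex.I) ≠ 0 := by
    apply mul_ne_zero (mul_ne_zero two_ne_zero hπC) Complex.I_ne_zero
  set z : ℂ := Complex.exp (2 * π * Complex.I * j / k) with hz
  have hz1 : z ≠ 1 := by
    intro h
    rw [hz, Complex.exp_eq_one_iff] at h
    obtain ⟨n, hn⟩ := h
    have h2 : (2*(π:ℂ)*Complex.I) * j = (2*(π:ℂ)*Complex.I) * (n*k) := by
      field_simp at hn
      linear_combination (2*(π:ℂ)*Complex.I) * hn
    have hj : (j : ℂ) = (n : ℂ) * k := mul_left_cancel₀ h2πI h2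
    have hjZ : (j : ℤ) = n * k := by exact_mod_cast hj
    have hj0' : (0:ℤ) < j := by exact_mod_cast hj0
    have hjk' : (j:ℤ) < k := by exact_mod_cast hjk
    have hk0' : (0:ℤ) < k := by exact_mod_cast hk0
    have hn1 : 1 ≤ n := by nlinarith
    nlinarith
  have hzk : z ^ k = 1 := by
    rw [hz, ← Complex.exp_nat_mul]
    rw [show (k : ℂ) * (2 * π * Complex.I * j / k) = j * (2 * π * Complex.I) from by
      field_simp]
    exact Complex.exp_nat_mul_two_pi_mul_I j
  have hgeom : ∑ i ∈ Finset.range k, z ^ i = 0 := by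
    rw [geom_sum_eq hz1, hzk]; simp
  have hre : ∀ α : ℕ, (z ^ α).re = Real.cos (2 * π * j * α / k) := by
    intro α
    rw [hz, ← Complex.exp_nat_mul]
    rw [show (α : ℂ) * (2 * π * Complex.I * j / k) = ((2 * π * j * α / k : ℝ) : ℂ) * Complex.I from by
      push_cast; field_simp]
    exact Complex.exp_ofReal_mul_I_re _
  have hsum0 : ∑ α ∈ Finset.range k, Real.cos (2 * π * j * α / k) = 0 := by
    have := congrArg Complex.re hgeom
    rw [Complex.re_sum] at this
    simpa [hre] using this
  have hsplit : ∑ α ∈ Finset.range k, Real.cos (2 * π * j * α / k)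
      = Real.cos 0 + ∑ α ∈ Finset.Icc 1 (k-1), Real.cos (2 * π * j * α / k) := by
    rw [Finset.range_eq_Ico, Finset.sum_eq_sum_Ico_succ_bot hk0]
    rw [show Finset.Icc 1 (k-1) = Finset.Ico 1 k from by
      rw [← Finset.Ico_add_one_right_eq_Icc]; congr 1; omega]
    norm_num
  rw [hsplit] at hsum0
  simp at hsum0
  linarith

theorem stmt_12 (k : ℕ) (hk : 2 ≤ k) (θ : ℕ) (hθ1 : 1 ≤ θ) (hθk : θ ≤ k - 1) :
    ∑ α ∈ Finset.Icc 1 k, Real.sin (2 * π * α * θ / k) * digamma ((α : ℝ) / k) =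
      π / 2 * (2 * (θ : ℝ) - k) := by
  have hkR : (k : ℝ) ≠ 0 := Nat.cast_ne_zero.mpr (by omega)
  set g : ℕ → ℝ := fun α => Real.sin (2 * π * α * θ / k) * digamma ((α : ℝ) / k) with hg
  -- strip the α = k term
  have htop : g k = 0 := by
    have : 2 * π * (k:ℝ) * θ / k = (2*θ : ℕ) * π := by push_cast; field_simp
    simp only [hg, this, Real.sin_nat_mul_pi, zero_mul]
  have hsplit : ∑ α ∈ Finset.Icc 1 k, g α = ∑ α ∈ Finset.Icc 1 (k-1), g α := by
    rw [show k = (k-1)+1 from by omega, Finset.sum_Icc_succ_top (by omega)]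
    rw [show (k-1)+1 = k from by omega, htop, add_zero]
  set T := ∑ α ∈ Finset.Icc 1 (k-1), g α with hT
  -- reflection reindex
  have hswap : T = ∑ α ∈ Finset.Icc 1 (k-1), g (k - α) := by
    apply Finset.sum_nbij' (fun α => k - α) (fun α => k - α)
    · intro a ha; simp only [Finset.mem_Icc] at *; omega
    · intro a ha; simp only [Finset.mem_Icc] at *; omega
    · intro a ha; simp only [Finset.mem_Icc] at *; omega
    · intro a ha; simp only [Finset.mem_Icc] at *; omega
    · intro a ha
      congr 1
      simp only [Finset.mem_Icc] at ha
      omega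
  -- pointwise value of g α + g (k - α)
  have hpt : ∀ α ∈ Finset.Icc 1 (k-1), g α + g (k - α) =
      -π * (1 + Real.cos (2*θ*(π*((α:ℝ)/k))) +
        2 * ∑ j ∈ Finset.Icc 1 (θ - 1), Real.cos (2*j*(π*((α:ℝ)/k)))) := by
    intro α hα
    simp only [Finset.mem_Icc] at hα
    have hαk : (α:ℝ) < k := by exact_mod_cast (by omega : α < k)
    have hα0 : (0:ℝ) < α := by exact_mod_cast (by omega : 0 < α)
    have hcast : ((k - α : ℕ) : ℝ) = (k:ℝ) - α := by
      push_cast [Nat.cast_sub (by omega : α ≤ k)]; ring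
    have hx0 : 0 < (α:ℝ)/k := by positivity
    have hx1 : (α:ℝ)/k < 1 := by
      rw [div_lt_one (by positivity)]; exact hαk
    have hsin_ne : Real.sin (π * ((α:ℝ)/k)) ≠ 0 := by
      apply ne_of_gt
      apply Real.sin_pos_of_pos_of_lt_pi (by positivity)
      nlinarith [Real.pi_pos]
    -- sin (2π(k-α)θ/k) = - sin (2παθ/k)
    have hsin_refl : Real.sin (2 * π * ((k:ℝ) - α) * θ / k) = - Real.sin (2 * π * α * θ / k) := by
      rw [show 2 * π * ((k:ℝ) - α) * θ / k = (θ:ℕ) * (2*π) + -(2 * π * α * θ / k) from by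
        field_simp; ring]
      rw [Real.sin_add, Real.sin_neg, Real.cos_neg]
      rw [show ((θ:ℕ):ℝ) * (2*π) = ((2*θ:ℕ):ℝ) * π from by push_cast; ring,
        Real.sin_nat_mul_pi]
      rw [show ((2*θ:ℕ):ℝ) * π = ((θ:ℕ):ℝ) * (2*π) from by push_cast; ring,
        Real.cos_nat_mul_two_pi]
      ring
    have hdiv : ((k:ℝ) - α) / k = 1 - (α:ℝ)/k := by field_simp
    have hrefl := digamma_reflect hx0 hx1
    have hid := cot_sin_identity (π * ((α:ℝ)/k)) θ hθ1
    have hsinarg : Real.sin (2 * π * (α:ℝ) * θ / k) = Real.sin (2*θ*(π*((α:ℝ)/k))) := by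
      congr 1; field_simp
    simp only [hg, hcast, hsin_refl, hdiv]
    rw [hsinarg]
    have key : Real.sin (2*θ*(π*((α:ℝ)/k))) * (-π * (Real.cos (π*((α:ℝ)/k)) / Real.sin (π*((α:ℝ)/k))))
        = -π * (1 + Real.cos (2*θ*(π*((α:ℝ)/k))) +
            2 * ∑ j ∈ Finset.Icc 1 (θ - 1), Real.cos (2*j*(π*((α:ℝ)/k)))) := by
      rw [show Real.sin (2*θ*(π*((α:ℝ)/k))) * (-π * (Real.cos (π*((α:ℝ)/k)) / Real.sin (π*((α:ℝ)/k))))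
          = (-π) * ((Real.cos (π*((α:ℝ)/k)) * Real.sin (2*θ*(π*((α:ℝ)/k)))) / Real.sin (π*((α:ℝ)/k))) from by ring]
      rw [hid, mul_div_cancel_left₀ _ hsin_ne]
    linear_combination Real.sin (2*θ*(π*((α:ℝ)/k))) * hrefl + key
  -- sum the pointwise identity
  have h2T : T + T = ∑ α ∈ Finset.Icc 1 (k-1), (g α + g (k - α)) := by
    rw [Finset.sum_add_distrib, ← hswap, ← hT]
  rw [Finset.sum_congr rfl hpt] at h2T
  -- evaluate the three sums
  have hcard : ∑ _α ∈ Finset.Icc 1 (k-1), (1:ℝ) = ((k:ℝ) - 1) := by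
    rw [Finset.sum_const, Nat.card_Icc]
    have : k - 1 + 1 - 1 = k - 1 := by omega
    rw [this, nsmul_eq_mul, mul_one]
    push_cast [Nat.cast_sub (by omega : 1 ≤ k)]; ring
  have hcosθ : ∑ α ∈ Finset.Icc 1 (k-1), Real.cos (2*θ*(π*((α:ℝ)/k))) = -1 := by
    rw [show (fun α : ℕ => Real.cos (2*(θ:ℝ)*(π*((α:ℝ)/k)))) = fun α : ℕ => Real.cos (2*π*θ*α/k) from
      funext fun α => by congr 1; field_simp]
    exact cos_sum_eq_neg_one (by omega) (by omega)
  have hdbl : ∑ α ∈ Finset.Icc 1 (k-1), ∑ j ∈ Finset.Icc 1 (θ-1), Real.cos (2*j*(π*((α:ℝ)/k)))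
      = -((θ:ℝ) - 1) := by
    rw [Finset.sum_comm]
    have : ∀ j ∈ Finset.Icc 1 (θ-1), ∑ α ∈ Finset.Icc 1 (k-1), Real.cos (2*(j:ℝ)*(π*((α:ℝ)/k))) = -1 := by
      intro j hj
      simp only [Finset.mem_Icc] at hj
      rw [show (fun α : ℕ => Real.cos (2*(j:ℝ)*(π*((α:ℝ)/k)))) = fun α : ℕ => Real.cos (2*π*j*α/k) from
        funext fun α => by congr 1; field_simp]
      exact cos_sum_eq_neg_one (by omega) (by omega)
    rw [Finset.sum_congr rfl this, Finset.sum_const, Nat.card_Icc]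
    have hθ1' : θ - 1 + 1 - 1 = θ - 1 := by omega
    rw [hθ1', nsmul_eq_mul]
    push_cast [Nat.cast_sub (by omega : 1 ≤ θ)]; ring
  have hfinal : T + T = -π * (((k:ℝ)-1) + (-1) + 2 * (-((θ:ℝ)-1))) := by
    rw [h2T, ← Finset.mul_sum]
    congr 1
    rw [Finset.sum_add_distrib, Finset.sum_add_distrib, ← Finset.mul_sum, hcard, hcosθ, hdbl]
  rw [hsplit]
  have hkcast : ((k:ℝ)) ≥ 2 := by exact_mod_cast hk
  linarith [hfinal]
end
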